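/- Let u ∈ N with q(u) = 1, let a₁, a₂ ∈ ℝ with a₁² + a₂² = 1, and set v := a₁𝐢 + a₂(𝐢×u). Then R(u,v) = { z + (a₁a₂/(1+a₂²))·(z×u) : z ∈ B }; equivalently, z×u ∈ T for every z ∈ B, and R(u,v) is the graph over B of the linear map Γ : B → T given by Γ(z) = (a₁a₂/(1+a₂²))·(z×u). -/

import Mathlib

noncomputable section

open Quaternion

/-- The split octonions `𝕆' = ℍ × ℍ`. -/
abbrev SplitOct : Type := ℍ[ℝ] × ℍ[ℝ]

namespace SplitOct

/-- Split octonion multiplication `(a,b)(c,d) = (ac + d̄b, da + bc̄)`. -/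
def mul (x y : SplitOct) : SplitOct :=
  (x.1 * y.1 + star y.2 * x.2, y.2 * x.1 + x.2 * star y.1)

/-- Split octonion conjugation `(a,b)* = (ā, −b)`. -/
def conj (x : SplitOct) : SplitOct := (star x.1, -x.2)

lemma conj_add (x y : SplitOct) : conj (x + y) = conj x + conj y := by
  simp only [conj, Prod.fst_add, Prod.snd_add, star_add, Prod.mk_add_mk, neg_add]

lemma conj_neg (x : SplitOct) : conj (-x) = -conj x := by
  simp [conj, Prod.ext_iff]

lemma conj_sub (x y : SplitOct) : conj (x - y) = conj x - conj y := by
  rw [sub_eq_add_neg, conj_add, conj_neg, ← sub_eq_add_neg]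

lemma conj_smul (r : ℝ) (x : SplitOct) : conj (r • x) = r • conj x := by
  simp [conj, Prod.ext_iff]

lemma conj_conj (x : SplitOct) : conj (conj x) = x := by
  simp [conj]

lemma conj_zero : conj 0 = 0 := by
  simp [conj, Prod.ext_iff]

/-- The imaginary split octonions `Im 𝕆' = {x | x* = −x}`. -/
def Im : Submodule ℝ SplitOct where
  carrier := {x | conj x = -x}
  add_mem' := by
    intro a b ha hb
    simp only [Set.mem_setOf_eq] at ha hb ⊢
    rw [conj_add, ha, hb, neg_add]
  zero_mem' := by
    simp only [Set.mem_setOf_eq, conj_zero, neg_zero]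
  smul_mem' := by
    intro r a ha
    simp only [Set.mem_setOf_eq] at ha ⊢
    rw [conj_smul, ha, smul_neg]

lemma mem_Im_iff {x : SplitOct} : x ∈ Im ↔ conj x = -x := Iff.rfl

/-- `q x = x·x*`, read as a real number (its values lie in `ℝ·1 ≅ ℝ`). -/
def q (x : SplitOct) : ℝ := (mul x (conj x)).1.re

/-- The polarization `⟨x,y⟩` of the quadratic form `q`. -/
def polar (x y : SplitOct) : ℝ := (q (x + y) - q x - q y) / 2

/-- The cross product `x × y = (xy − (xy)*)/2`. -/
def cross (x y : SplitOct) : SplitOct := (2 : ℝ)⁻¹ • (mul x y - conj (mul x y))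

/-- The scalar triple product `Ω(u,v,w) = ⟨u×v, w⟩`. -/
def triple (u v w : SplitOct) : ℝ := polar (cross u v) w

lemma q_apply (x : SplitOct) : q x = normSq x.1 - normSq x.2 := by
  simp only [q, mul, conj, star_neg, neg_mul, Quaternion.self_mul_star, Quaternion.star_mul_self,
    Quaternion.re_add, Quaternion.re_neg, Quaternion.re_coe]
  ring

lemma polar_apply (x y : SplitOct) :
    polar x y = (x.1 * star y.1).re - (x.2 * star y.2).re := by
  simp only [polar, q_apply, Prod.fst_add, Prod.snd_add, Quaternion.normSq_def',
    Quaternion.re_mul, Quaternion.re_add, Quaternion.imI_add, Quaternion.imJ_add,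
    Quaternion.imK_add, Quaternion.re_star, Quaternion.imI_star, Quaternion.imJ_star,
    Quaternion.imK_star]
  ring

lemma polar_add_left (x x' y : SplitOct) : polar (x + x') y = polar x y + polar x' y := by
  simp only [polar_apply, Prod.fst_add, Prod.snd_add, add_mul, Quaternion.re_add]
  ring

lemma polar_add_right (x y y' : SplitOct) : polar x (y + y') = polar x y + polar x y' := by
  simp only [polar_apply, Prod.fst_add, Prod.snd_add, star_add, mul_add, Quaternion.re_add]
  ring

lemma polar_smul_left (r : ℝ) (x y : SplitOct) : polar (r • x) y = r * polar x y := by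
  simp only [polar_apply, Prod.smul_fst, Prod.smul_snd, smul_mul_assoc, Quaternion.re_smul,
    smul_eq_mul]
  ring

lemma polar_smul_right (r : ℝ) (x y : SplitOct) : polar x (r • y) = r * polar x y := by
  simp only [polar_apply, Prod.smul_fst, Prod.smul_snd, Quaternion.star_smul,
    mul_smul_comm, Quaternion.re_smul, smul_eq_mul]
  ring

lemma polar_zero_left (y : SplitOct) : polar 0 y = 0 := by
  simp [polar_apply]

lemma polar_zero_right (x : SplitOct) : polar x 0 = 0 := by
  simp [polar_apply]

lemma mul_add_left (x x' y : SplitOct) : mul (x + x') y = mul x y + mul x' y := by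
  simp only [mul, Prod.fst_add, Prod.snd_add, add_mul, mul_add, Prod.mk_add_mk, Prod.mk.injEq]
  constructor <;> abel

lemma mul_add_right (x y y' : SplitOct) : mul x (y + y') = mul x y + mul x y' := by
  simp only [mul, Prod.fst_add, Prod.snd_add, star_add, add_mul, mul_add, Prod.mk_add_mk,
    Prod.mk.injEq]
  constructor <;> abel

lemma mul_smul_left (r : ℝ) (x y : SplitOct) : mul (r • x) y = r • mul x y := by
  simp only [mul, Prod.smul_fst, Prod.smul_snd, smul_mul_assoc, mul_smul_comm, Prod.smul_mk,
    smul_add]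

lemma mul_smul_right (r : ℝ) (x y : SplitOct) : mul x (r • y) = r • mul x y := by
  simp only [mul, Prod.smul_fst, Prod.smul_snd, Quaternion.star_smul, smul_mul_assoc,
    mul_smul_comm, Prod.smul_mk, smul_add]

lemma mul_zero_left (y : SplitOct) : mul 0 y = 0 := by
  simp [mul, Prod.ext_iff]

lemma mul_zero_right (x : SplitOct) : mul x 0 = 0 := by
  simp [mul, Prod.ext_iff]

lemma cross_add_left (x x' y : SplitOct) : cross (x + x') y = cross x y + cross x' y := by
  rw [cross, cross, cross, mul_add_left, conj_add]
  module

lemma cross_add_right (x y y' : SplitOct) : cross x (y + y') = cross x y + cross x y' := by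
  rw [cross, cross, cross, mul_add_right, conj_add]
  module

lemma cross_smul_left (r : ℝ) (x y : SplitOct) : cross (r • x) y = r • cross x y := by
  rw [cross, cross, mul_smul_left, conj_smul]
  module

lemma cross_smul_right (r : ℝ) (x y : SplitOct) : cross x (r • y) = r • cross x y := by
  rw [cross, cross, mul_smul_right, conj_smul]
  module

lemma cross_zero_left (y : SplitOct) : cross 0 y = 0 := by
  simp [cross, mul_zero_left, conj_zero]

lemma cross_zero_right (x : SplitOct) : cross x 0 = 0 := by
  simp [cross, mul_zero_right, conj_zero]

lemma cross_mem_Im (x y : SplitOct) : cross x y ∈ Im := by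
  rw [mem_Im_iff, cross, conj_smul, conj_sub, conj_conj]
  module

lemma triple_add₁ (u u' v w : SplitOct) :
    triple (u + u') v w = triple u v w + triple u' v w := by
  rw [triple, triple, triple, cross_add_left, polar_add_left]

lemma triple_add₂ (u v v' w : SplitOct) :
    triple u (v + v') w = triple u v w + triple u v' w := by
  rw [triple, triple, triple, cross_add_right, polar_add_left]

lemma triple_add₃ (u v w w' : SplitOct) :
    triple u v (w + w') = triple u v w + triple u v w' :=
  polar_add_right _ _ _

lemma triple_smul₁ (r : ℝ) (u v w : SplitOct) : triple (r • u) v w = r * triple u v w := by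
  rw [triple, triple, cross_smul_left, polar_smul_left]

lemma triple_smul₂ (r : ℝ) (u v w : SplitOct) : triple u (r • v) w = r * triple u v w := by
  rw [triple, triple, cross_smul_right, polar_smul_left]

lemma triple_smul₃ (r : ℝ) (u v w : SplitOct) : triple u v (r • w) = r * triple u v w :=
  polar_smul_right _ _ _

lemma triple_zero₁ (v w : SplitOct) : triple 0 v w = 0 := by
  rw [triple, cross_zero_left, polar_zero_left]

lemma triple_zero₂ (u w : SplitOct) : triple u 0 w = 0 := by
  rw [triple, cross_zero_right, polar_zero_left]

lemma triple_zero₃ (u v : SplitOct) : triple u v 0 = 0 :=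
  polar_zero_right _

/-- The orthogonal complement of `P` inside the imaginary split octonions. -/
def orth (P : Submodule ℝ SplitOct) : Submodule ℝ SplitOct where
  carrier := {x | x ∈ Im ∧ ∀ y ∈ P, polar x y = 0}
  add_mem' := by
    rintro a b ⟨ha1, ha2⟩ ⟨hb1, hb2⟩
    exact ⟨Im.add_mem ha1 hb1, fun y hy => by
      rw [polar_add_left, ha2 y hy, hb2 y hy, add_zero]⟩
  zero_mem' := ⟨Im.zero_mem, fun y _ => polar_zero_left y⟩
  smul_mem' := by
    rintro r a ⟨ha1, ha2⟩
    exact ⟨Im.smul_mem r ha1, fun y hy => by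
      rw [polar_smul_left, ha2 y hy, mul_zero]⟩

/-- The annihilator `Ann x = {v ∈ Im 𝕆' | x × v = 0}`. -/
def Ann (x : SplitOct) : Submodule ℝ SplitOct where
  carrier := {v | v ∈ Im ∧ cross x v = 0}
  add_mem' := by
    rintro a b ⟨ha1, ha2⟩ ⟨hb1, hb2⟩
    exact ⟨Im.add_mem ha1 hb1, by rw [cross_add_right, ha2, hb2, add_zero]⟩
  zero_mem' := ⟨Im.zero_mem, cross_zero_right x⟩
  smul_mem' := by
    rintro r a ⟨ha1, ha2⟩
    exact ⟨Im.smul_mem r ha1, by rw [cross_smul_right, ha2, smul_zero]⟩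

/-- An isotropic line of `Im 𝕆'`. -/
def IsIsotropicLine (ℓ : Submodule ℝ SplitOct) : Prop :=
  ∃ x, x ∈ Im ∧ x ≠ 0 ∧ q x = 0 ∧ ℓ = Submodule.span ℝ {x}

/-- An annihilator photon: a 2-dimensional totally isotropic subspace of `Im 𝕆'`
on which the cross product vanishes identically. -/
def IsAnnihilatorPhoton (ω : Submodule ℝ SplitOct) : Prop :=
  ω ≤ Im ∧ Module.finrank ℝ ω = 2 ∧ (∀ x ∈ ω, q x = 0) ∧
    ∀ x ∈ ω, ∀ y ∈ ω, cross x y = 0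


/-- The imaginary unit `𝐢 = (i, 0)`. -/
def oi : SplitOct := ((⟨0, 1, 0, 0⟩ : ℍ[ℝ]), 0)

/-- The imaginary unit `𝐣 = (j, 0)`. -/
def oj : SplitOct := ((⟨0, 0, 1, 0⟩ : ℍ[ℝ]), 0)

/-- The imaginary unit `𝐤 = (k, 0)`. -/
def ok : SplitOct := ((⟨0, 0, 0, 1⟩ : ℍ[ℝ]), 0)

/-- The split unit `𝐥 = (0, 1)`. -/
def ol : SplitOct := (0, 1)

/-- `𝐥𝐢 = 𝐥·𝐢`. -/
def oli : SplitOct := mul ol oi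

/-- `𝐥𝐣 = 𝐥·𝐣`. -/
def olj : SplitOct := mul ol oj

/-- `𝐥𝐤 = 𝐥·𝐤`. -/
def olk : SplitOct := mul ol ok

/-- `L = ℝ𝐢`. -/
def Lline : Submodule ℝ SplitOct := Submodule.span ℝ {oi}

/-- `T = span{𝐥, 𝐥𝐢}`. -/
def Tplane : Submodule ℝ SplitOct := Submodule.span ℝ {ol, oli}

/-- `N = span{𝐣, 𝐤}`. -/
def Nplane : Submodule ℝ SplitOct := Submodule.span ℝ {oj, ok}

/-- `B = span{𝐥𝐣, 𝐥𝐤}`. -/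
def Bplane : Submodule ℝ SplitOct := Submodule.span ℝ {olj, olk}

/-- `P = L ⊕ N = span{𝐢, 𝐣, 𝐤}`. -/
def Pplane : Submodule ℝ SplitOct := Submodule.span ℝ {oi, oj, ok}

lemma oi_mem_P : oi ∈ Pplane := Submodule.subset_span (by simp)

lemma N_le_P : Nplane ≤ Pplane := by
  refine Submodule.span_le.mpr ?_
  rintro x hx
  simp only [Set.mem_insert_iff, Set.mem_singleton_iff] at hx
  rcases hx with rfl | rfl
  · exact Submodule.subset_span (by simp)
  · exact Submodule.subset_span (by simp)

/-- The pencil `𝒫₀` of linear maps `φ : P → Im 𝕆'` with `φ 𝐢 = 0`, `φ N ⊆ T`, and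
`φ (𝐢×n) = 𝐢×(φ n)` for all `n ∈ N`. -/
def Pzero : Set (Pplane →ₗ[ℝ] SplitOct) :=
  {φ | (∀ x, φ x ∈ Im) ∧
    φ ⟨oi, oi_mem_P⟩ = 0 ∧
    (∀ n, ∀ hn : n ∈ Nplane, φ ⟨n, N_le_P hn⟩ ∈ Tplane) ∧
    ∀ n, ∀ hn : n ∈ Nplane, ∀ hmem : cross oi n ∈ Pplane,
      φ ⟨cross oi n, hmem⟩ = cross oi (φ ⟨n, N_le_P hn⟩)}

/-- The subspace `R(u,v) = {z ∈ P⊥ : ⟨φ u, z⟩ + ⟨φ v, (uv)z⟩ = 0 for all φ ∈ 𝒫₀}`. -/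
def Rsub (u v : SplitOct) (hu : u ∈ Pplane) (hv : v ∈ Pplane) : Submodule ℝ SplitOct where
  carrier := {z | z ∈ orth Pplane ∧
    ∀ φ ∈ Pzero, polar (φ ⟨u, hu⟩) z + polar (φ ⟨v, hv⟩) (mul (mul u v) z) = 0}
  add_mem' := by
    rintro a b ⟨ha1, ha2⟩ ⟨hb1, hb2⟩
    refine ⟨(orth Pplane).add_mem ha1 hb1, fun φ hφ => ?_⟩
    rw [mul_add_right, polar_add_right, polar_add_right]
    have h1 := ha2 φ hφ
    have h2 := hb2 φ hφ
    linarith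
  zero_mem' := by
    refine ⟨(orth Pplane).zero_mem, fun φ hφ => ?_⟩
    rw [mul_zero_right, polar_zero_right, polar_zero_right, add_zero]
  smul_mem' := by
    rintro r a ⟨ha1, ha2⟩
    refine ⟨(orth Pplane).smul_mem r ha1, fun φ hφ => ?_⟩
    rw [mul_smul_right, polar_smul_right, polar_smul_right, ← mul_add, ha2 φ hφ, mul_zero]

lemma mul_oi_oj : mul oi oj = ok := by
  have h : (⟨0,1,0,0⟩ : ℍ[ℝ]) * ⟨0,0,1,0⟩ = ⟨0,0,0,1⟩ := by
    ext <;> simp [Quaternion.re_mul, Quaternion.imI_mul, Quaternion.imJ_mul, Quaternion.imK_mul]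
  simp [mul, oi, oj, ok, h, Prod.ext_iff]
  exact ⟨h, zero_mul _⟩

lemma mul_oi_ok : mul oi ok = -oj := by
  have h : (⟨0,1,0,0⟩ : ℍ[ℝ]) * ⟨0,0,0,1⟩ = -⟨0,0,1,0⟩ := by
    ext <;> simp [Quaternion.re_mul, Quaternion.imI_mul, Quaternion.imJ_mul, Quaternion.imK_mul]
  simp [mul, oi, oj, ok, h, Prod.ext_iff]
  exact ⟨h, zero_mul _⟩

lemma conj_ok : conj ok = -ok := by
  simp [conj, ok, Prod.ext_iff]
  apply Quaternion.ext <;> first | rfl | (show (0:ℝ) + 0 * 0 = -0; simp)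

lemma conj_oj : conj oj = -oj := by
  simp [conj, oj, Prod.ext_iff]
  apply Quaternion.ext <;> first | rfl | (show (0:ℝ) + 0 * 0 = -0; simp)

lemma cross_oi_oj : cross oi oj = ok := by
  rw [cross, mul_oi_oj, conj_ok, sub_neg_eq_add, ← two_smul ℝ, smul_smul]
  norm_num

lemma cross_oi_ok : cross oi ok = -oj := by
  rw [cross, mul_oi_ok, conj_neg, conj_oj, neg_neg]
  have h2 : -oj - oj = (2 : ℝ) • (-oj) := by
    rw [two_smul]; abel
  rw [h2, smul_smul]
  norm_num

lemma cross_oi_mem_N {n : SplitOct} (hn : n ∈ Nplane) : cross oi n ∈ Nplane := by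
  induction hn using Submodule.span_induction with
  | mem x hx =>
    simp only [Set.mem_insert_iff, Set.mem_singleton_iff] at hx
    rcases hx with rfl | rfl
    · rw [cross_oi_oj]; exact Submodule.subset_span (by simp)
    · rw [cross_oi_ok]; exact Submodule.neg_mem _ (Submodule.subset_span (by simp))
  | zero => rw [cross_zero_right]; exact Submodule.zero_mem _
  | add x y hx hy ihx ihy => rw [cross_add_right]; exact Submodule.add_mem _ ihx ihy
  | smul r x hx ih => rw [cross_smul_right]; exact Submodule.smul_mem _ r ih

/-! ### Auxiliary lemmas -/

/-- A quaternion built from its four components, typed as `ℍ[ℝ]`. -/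
def qmk (a b c d : ℝ) : ℍ[ℝ] := ⟨a, b, c, d⟩

@[simp] lemma mk_eq_qmk (a b c d : ℝ) : (⟨a, b, c, d⟩ : ℍ[ℝ]) = qmk a b c d := rfl

@[simp] lemma qmk_re (a b c d : ℝ) : (qmk a b c d).re = a := rfl

@[simp] lemma qmk_imI (a b c d : ℝ) : (qmk a b c d).imI = b := rfl

@[simp] lemma qmk_imJ (a b c d : ℝ) : (qmk a b c d).imJ = c := rfl

@[simp] lemma qmk_imK (a b c d : ℝ) : (qmk a b c d).imK = d := rfl


lemma oli_eq : oli = (0, -(qmk 0 1 0 0)) := by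
  simp only [oli, mul, ol, oi]
  ext <;> simp

lemma olj_eq : olj = (0, -(qmk 0 0 1 0)) := by
  simp only [olj, mul, ol, oj]
  ext <;> simp

lemma olk_eq : olk = (0, -(qmk 0 0 0 1)) := by
  simp only [olk, mul, ol, ok]
  ext <;> simp

lemma mem_T_of (s t : ℝ) : ((0, (qmk s t 0 0)) : SplitOct) ∈ Tplane := by
  rw [Tplane, Submodule.mem_span_pair]
  refine ⟨s, -t, ?_⟩
  rw [oli_eq]
  simp only [ol, Prod.smul_mk, Prod.mk_add_mk, Prod.mk.injEq]
  constructor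
  · simp
  · ext <;> simp

lemma mem_N_iff {n : SplitOct} : n ∈ Nplane ↔ ∃ b c : ℝ, n = ((qmk 0 0 b c), 0) := by
  rw [Nplane, Submodule.mem_span_pair]
  constructor
  · rintro ⟨b, c, rfl⟩
    refine ⟨b, c, ?_⟩
    simp only [mk_eq_qmk, oj, ok, Prod.smul_mk, Prod.mk_add_mk, Prod.mk.injEq]
    constructor
    · ext <;> simp
    · simp
  · rintro ⟨b, c, rfl⟩
    refine ⟨b, c, ?_⟩
    simp only [mk_eq_qmk, oj, ok, Prod.smul_mk, Prod.mk_add_mk, Prod.mk.injEq]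
    constructor
    · ext <;> simp
    · simp

lemma mem_B_iff {z : SplitOct} : z ∈ Bplane ↔ ∃ m n : ℝ, z = (0, (qmk 0 0 m n)) := by
  rw [Bplane, Submodule.mem_span_pair]
  constructor
  · rintro ⟨m, n, rfl⟩
    refine ⟨-m, -n, ?_⟩
    rw [olj_eq, olk_eq]
    simp only [Prod.smul_mk, Prod.mk_add_mk, Prod.mk.injEq]
    constructor
    · simp
    · ext <;> simp
  · rintro ⟨m, n, rfl⟩
    refine ⟨-m, -n, ?_⟩
    rw [olj_eq, olk_eq]
    simp only [Prod.smul_mk, Prod.mk_add_mk, Prod.mk.injEq]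
    constructor
    · simp
    · ext <;> simp
lemma polar_pairs (x y x' y' : ℍ[ℝ]) :
    polar (x, y) (x', y') = (x * star x').re - (y * star y').re := polar_apply _ _

lemma mem_orthP_iff {z : SplitOct} : z ∈ orth Pplane ↔ ∃ y : ℍ[ℝ], z = (0, y) := by
  constructor
  · rintro ⟨hIm, hperp⟩
    rw [mem_Im_iff] at hIm
    have h0 : z.1.re = 0 := by
      have := congrArg (fun w : SplitOct => w.1.re) hIm
      simp only [conj, Prod.fst_neg, Quaternion.re_neg, Quaternion.re_star] at this
      linarith
    have h1 : z.1.imI = 0 := by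
      have := hperp oi (Submodule.subset_span (by simp))
      simp only [polar_apply, oi, mk_eq_qmk, qmk_re, qmk_imI, qmk_imJ, qmk_imK] at this
      simp only [Quaternion.re_mul, Quaternion.re_star, Quaternion.imI_star,
        Quaternion.imJ_star, Quaternion.imK_star] at this
      simp only [Quaternion.re_zero, Quaternion.imI_zero, Quaternion.imJ_zero,
        Quaternion.imK_zero, qmk_re, qmk_imI, qmk_imJ, qmk_imK] at this
      -- this : expression = 0
      nlinarith [this]
    have h2 : z.1.imJ = 0 := by
      have := hperp oj (Submodule.subset_span (by simp))
      simp only [polar_apply, oj, mk_eq_qmk, qmk_re, qmk_imI, qmk_imJ, qmk_imK, Quaternion.re_mul, Quaternion.re_star, Quaternion.imI_star,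
        Quaternion.imJ_star, Quaternion.imK_star, Quaternion.re_zero,
        Quaternion.imI_zero, Quaternion.imJ_zero, Quaternion.imK_zero] at this
      nlinarith [this]
    have h3 : z.1.imK = 0 := by
      have := hperp ok (Submodule.subset_span (by simp))
      simp only [polar_apply, ok, mk_eq_qmk, qmk_re, qmk_imI, qmk_imJ, qmk_imK, Quaternion.re_mul, Quaternion.re_star, Quaternion.imI_star,
        Quaternion.imJ_star, Quaternion.imK_star, Quaternion.re_zero,
        Quaternion.imI_zero, Quaternion.imJ_zero, Quaternion.imK_zero] at this
      nlinarith [this]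
    refine ⟨z.2, ?_⟩
    have : z.1 = 0 := by ext <;> assumption
    rw [← this]
  · rintro ⟨y, rfl⟩
    refine ⟨?_, ?_⟩
    · rw [mem_Im_iff]
      simp [conj, Prod.ext_iff]
    · intro p hp
      have key : ∀ w ∈ ({oi, oj, ok} : Set SplitOct), polar ((0 : ℍ[ℝ]), y) w = 0 := by
        rintro w hw
        simp only [Set.mem_insert_iff, Set.mem_singleton_iff] at hw
        rcases hw with rfl | rfl | rfl <;>
          simp [polar_apply, oi, oj, ok]
      rw [Pplane] at hp
      induction hp using Submodule.span_induction with
      | mem x hx => exact key x hx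
      | zero => exact polar_zero_right _
      | add x w hx hw ihx ihw => rw [polar_add_right, ihx, ihw, add_zero]
      | smul r x hx ih => rw [polar_smul_right, ih, mul_zero]
lemma mem_T_iff {t : SplitOct} : t ∈ Tplane ↔ ∃ s s' : ℝ, t = (0, (qmk s (s') 0 0)) := by
  rw [Tplane, Submodule.mem_span_pair]
  constructor
  · rintro ⟨s, s', rfl⟩
    refine ⟨s, -s', ?_⟩
    rw [oli_eq]
    simp only [ol, Prod.smul_mk, Prod.mk_add_mk, Prod.mk.injEq]
    constructor
    · simp
    · ext <;> simp
  · rintro ⟨s, s', rfl⟩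
    refine ⟨s, -s', ?_⟩
    rw [oli_eq]
    simp only [ol, Prod.smul_mk, Prod.mk_add_mk, Prod.mk.injEq]
    constructor
    · simp
    · ext <;> simp

lemma cross_oi_fst (x : ℍ[ℝ]) :
    cross oi ((x, 0) : SplitOct) =
      ((qmk 0 x.re (-x.imK) x.imJ), 0) := by
  simp only [cross, mul, conj, oi]
  refine Prod.ext ?_ ?_ <;>
    ext <;>
      simp [Quaternion.re_mul, Quaternion.imI_mul, Quaternion.imJ_mul, Quaternion.imK_mul] <;>
      ring

lemma cross_oi_snd (w : ℍ[ℝ]) :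
    cross oi ((0, w) : SplitOct) = (0, (qmk (-w.imI) w.re w.imK (-w.imJ))) := by
  simp only [cross, mul, conj, oi]
  refine Prod.ext ?_ ?_ <;>
    ext <;>
      simp [Quaternion.re_mul, Quaternion.imI_mul, Quaternion.imJ_mul, Quaternion.imK_mul] <;>
      ring

/-- First pencil generator, globally defined. -/
def f1 : SplitOct →ₗ[ℝ] SplitOct where
  toFun x := (0, (qmk x.1.imJ x.1.imK 0 0))
  map_add' x y := by
    refine Prod.ext (by simp) ?_
    ext <;> simp
  map_smul' r x := by
    refine Prod.ext (by simp) ?_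
    ext <;> simp

/-- Second pencil generator, globally defined. -/
def f2 : SplitOct →ₗ[ℝ] SplitOct where
  toFun x := (0, (qmk x.1.imK (-x.1.imJ) 0 0))
  map_add' x y := by
    refine Prod.ext (by simp) ?_
    ext <;> simp <;> ring
  map_smul' r x := by
    refine Prod.ext (by simp) ?_
    ext <;> simp

lemma snd_mem_Im (w : ℍ[ℝ]) : ((0, w) : SplitOct) ∈ Im := by
  rw [mem_Im_iff]
  simp [conj, Prod.ext_iff]

lemma f1_mem_Pzero : f1.comp Pplane.subtype ∈ Pzero := by
  refine ⟨fun x => snd_mem_Im _, ?_, ?_, ?_⟩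
  · simp only [LinearMap.comp_apply, Submodule.subtype_apply, f1, LinearMap.coe_mk,
      AddHom.coe_mk, oi]
    refine Prod.ext (by simp) ?_
    ext <;> simp
  · intro n hn
    exact mem_T_of _ _
  · intro n hn hmem
    obtain ⟨α, β, rfl⟩ := mem_N_iff.mp hn
    simp only [LinearMap.comp_apply, Submodule.subtype_apply, f1, LinearMap.coe_mk,
      AddHom.coe_mk]
    rw [cross_oi_fst, cross_oi_snd]
    refine Prod.ext (by simp) ?_
    ext <;> simp

lemma f2_mem_Pzero : f2.comp Pplane.subtype ∈ Pzero := by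
  refine ⟨fun x => snd_mem_Im _, ?_, ?_, ?_⟩
  · simp only [LinearMap.comp_apply, Submodule.subtype_apply, f2, LinearMap.coe_mk,
      AddHom.coe_mk, oi]
    refine Prod.ext (by simp) ?_
    ext <;> simp
  · intro n hn
    exact mem_T_of _ _
  · intro n hn hmem
    obtain ⟨α, β, rfl⟩ := mem_N_iff.mp hn
    simp only [LinearMap.comp_apply, Submodule.subtype_apply, f2, LinearMap.coe_mk,
      AddHom.coe_mk]
    rw [cross_oi_fst, cross_oi_snd]
    refine Prod.ext (by simp) ?_
    ext <;> simp
lemma mul_fst_fst (x x' : ℍ[ℝ]) : mul ((x, 0) : SplitOct) (x', 0) = (x * x', 0) := by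
  simp [mul, Prod.ext_iff]

lemma mul_fst_snd (w y : ℍ[ℝ]) : mul ((w, 0) : SplitOct) (0, y) = (0, y * w) := by
  simp [mul, Prod.ext_iff]

lemma cross_snd_fst (p x : ℍ[ℝ]) : cross ((0, p) : SplitOct) (x, 0) = (0, p * star x) := by
  simp only [cross, mul, conj]
  refine Prod.ext ?_ ?_ <;> ext <;> simp <;> ring

set_option maxHeartbeats 1000000 in
/-- For `u ∈ N` of unit norm and `v = a₁𝐢 + a₂(𝐢×u)` with `a₁² + a₂² = 1`,
the subspace `R(u,v)` is the graph over `B` of the map `z ↦ (a₁a₂/(1+a₂²))·(z×u) : B → T`. -/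
theorem R_is_graph_over_B
    (u : SplitOct) (huN : u ∈ Nplane) (hqu : q u = 1)
    (a₁ a₂ : ℝ) (ha : a₁ ^ 2 + a₂ ^ 2 = 1) :
    ((Rsub u (a₁ • oi + a₂ • cross oi u) (N_le_P huN)
        (Pplane.add_mem (Pplane.smul_mem a₁ oi_mem_P)
          (Pplane.smul_mem a₂ (N_le_P (cross_oi_mem_N huN)))) : Set SplitOct)
      = (fun z => z + (a₁ * a₂ / (1 + a₂ ^ 2)) • cross z u) '' (Bplane : Set SplitOct)) ∧
    ∀ z ∈ Bplane, cross z u ∈ Tplane := by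
  obtain ⟨b, c, rfl⟩ := mem_N_iff.mp huN
  have hbc : b ^ 2 + c ^ 2 = 1 := by
    simp [q_apply, Quaternion.normSq_def'] at hqu
    linarith
  have h2 : (1 + a₂ ^ 2) ≠ 0 := by positivity
  have hcr : cross oi ((((qmk 0 0 b c), 0)) : SplitOct) = ((qmk 0 0 (-c) b), 0) := by
    rw [cross_oi_fst]; rfl
  have hv : a₁ • oi + a₂ • ((((qmk 0 0 (-c) b), 0)) : SplitOct)
      = ((qmk 0 a₁ (-(a₂*c)) (a₂*b)), 0) := by
    simp only [mk_eq_qmk, oi, Prod.smul_mk, Prod.mk_add_mk, Prod.mk.injEq]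
    constructor
    · ext <;> simp
    · simp
  have huv : mul ((((qmk 0 0 b c), 0)) : SplitOct) ((qmk 0 a₁ (-(a₂*c)) (a₂*b)), 0)
      = ((qmk 0 a₂ (a₁*c) (-(a₁*b))), 0) := by
    rw [mul_fst_fst]
    refine Prod.ext ?_ rfl
    ext <;>
        simp [Quaternion.re_mul, Quaternion.imI_mul, Quaternion.imJ_mul, Quaternion.imK_mul] <;>
      first
        | ring1
        | linear_combination a₂ * hbc
        | linear_combination (-a₂) * hbc
  constructor
  · ext z
    simp only [Set.mem_image, SetLike.mem_coe]
    constructor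
    · rintro ⟨hzO, hzφ⟩
      obtain ⟨y, rfl⟩ := mem_orthP_iff.mp hzO
      have e1 := hzφ _ f1_mem_Pzero
      have e2 := hzφ _ f2_mem_Pzero
      simp only [LinearMap.comp_apply, Submodule.subtype_apply, f1, f2, LinearMap.coe_mk,
        AddHom.coe_mk] at e1 e2
      rw [hcr, hv, huv, mul_fst_snd] at e1 e2
      simp only [polar_apply, mk_eq_qmk, qmk_re, qmk_imI, qmk_imJ, qmk_imK, Quaternion.re_mul, Quaternion.imI_mul, Quaternion.imJ_mul,
        Quaternion.imK_mul, Quaternion.re_star, Quaternion.imI_star, Quaternion.imJ_star,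
        Quaternion.imK_star, Quaternion.re_zero, Quaternion.imI_zero, Quaternion.imJ_zero,
        Quaternion.imK_zero] at e1 e2
      ring_nf at e1 e2
      have E1 : b*(1+a₂^2)*y.re + c*(1+a₂^2)*y.imI - a₁*a₂*(b^2-c^2)*y.imJ
          - 2*a₁*a₂*b*c*y.imK = 0 := by linear_combination -e1
      have E2 : c*(1+a₂^2)*y.re - b*(1+a₂^2)*y.imI - 2*a₁*a₂*b*c*y.imJ
          + a₁*a₂*(b^2-c^2)*y.imK = 0 := by linear_combination -e2
      have hre : (1 + a₂ ^ 2) * y.re = a₁ * a₂ * (b * y.imJ + c * y.imK) := by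
        linear_combination b * E1 + c * E2
          - ((1 + a₂ ^ 2) * y.re - a₁ * a₂ * (b * y.imJ + c * y.imK)) * hbc
      have himI : (1 + a₂ ^ 2) * y.imI = a₁ * a₂ * (b * y.imK - c * y.imJ) := by
        linear_combination c * E1 - b * E2
          - ((1 + a₂ ^ 2) * y.imI - a₁ * a₂ * (b * y.imK - c * y.imJ)) * hbc
      refine ⟨(0, (qmk 0 0 y.imJ y.imK)), mem_B_iff.mpr ⟨y.imJ, y.imK, rfl⟩, ?_⟩
      rw [cross_snd_fst]
      refine Prod.ext (by simp) ?_
      simp only [Prod.snd_add, Prod.smul_snd]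
      ext <;>
        simp [Quaternion.re_mul, Quaternion.imI_mul, Quaternion.imJ_mul, Quaternion.imK_mul]
      · field_simp
        linear_combination -hre
      · field_simp
        linear_combination -himI
    · rintro ⟨w, hwB, rfl⟩
      obtain ⟨m, n, rfl⟩ := mem_B_iff.mp hwB
      show ((0, (qmk 0 0 m n)) : SplitOct)
          + (a₁ * a₂ / (1 + a₂ ^ 2)) • cross (0, (qmk 0 0 m n)) _ ∈ _
      rw [cross_snd_fst]
      have hyform : ((0, (qmk 0 0 m n)) : SplitOct)
          + (a₁ * a₂ / (1 + a₂ ^ 2)) • (0, (qmk 0 0 m n) * star (qmk 0 0 b c))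
          = (0, (qmk (a₁ * a₂ / (1 + a₂ ^ 2) * (m*b + n*c)) (a₁ * a₂ / (1 + a₂ ^ 2) * (n*b - m*c)) m n)) := by
        refine Prod.ext (by simp) ?_
        simp only [Prod.snd_add, Prod.smul_snd]
        ext <;>
            simp [Quaternion.re_mul, Quaternion.imI_mul, Quaternion.imJ_mul,
              Quaternion.imK_mul] <;>
          first
            | ring1
            | exact Or.inl (by ring)
            | tauto
      rw [hyform]
      refine ⟨mem_orthP_iff.mpr ⟨_, rfl⟩, ?_⟩
      intro φ hφ
      obtain ⟨hIm, hφi, hφT, hφc⟩ := hφ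
      have ojN : oj ∈ Nplane := Submodule.subset_span (by simp)
      have okN : ok ∈ Nplane := Submodule.subset_span (by simp)
      have hφok : φ ⟨ok, N_le_P okN⟩ = cross oi (φ ⟨oj, N_le_P ojN⟩) := by
        have h := hφc oj ojN (N_le_P (cross_oi_mem_N ojN))
        rwa [show (⟨cross oi oj, N_le_P (cross_oi_mem_N ojN)⟩ : Pplane)
          = ⟨ok, N_le_P okN⟩ from Subtype.ext cross_oi_oj] at h
      obtain ⟨s, s', hsj⟩ := mem_T_iff.mp (hφT oj ojN)
      have hsk : φ ⟨ok, N_le_P okN⟩ = (0, (qmk (-s') s 0 0)) := by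
        rw [hφok, hsj, cross_oi_snd]
        refine Prod.ext rfl ?_
        ext <;> simp
      have huP : (⟨(((qmk 0 0 b c), 0) : SplitOct), N_le_P huN⟩ : Pplane)
          = b • ⟨oj, N_le_P ojN⟩ + c • ⟨ok, N_le_P okN⟩ := by
        apply Subtype.ext
        simp only [Submodule.coe_add, SetLike.val_smul, oj, ok, Prod.smul_mk, Prod.mk_add_mk]
        refine Prod.ext ?_ (by simp)
        ext <;> simp
      have hphiu : φ ⟨(((qmk 0 0 b c), 0) : SplitOct), N_le_P huN⟩
          = (0, (qmk (b*s - c*s') (b*s' + c*s) 0 0)) := by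
        rw [huP, map_add, map_smul, map_smul, hsj, hsk]
        refine Prod.ext (by simp) ?_
        ext <;> simp <;> ring
      have hvP : (⟨a₁ • oi + a₂ • cross oi (((qmk 0 0 b c), 0) : SplitOct),
            Pplane.add_mem (Pplane.smul_mem a₁ oi_mem_P)
              (Pplane.smul_mem a₂ (N_le_P (cross_oi_mem_N huN)))⟩ : Pplane)
          = a₁ • ⟨oi, oi_mem_P⟩ + ((-(a₂*c)) • ⟨oj, N_le_P ojN⟩ + (a₂*b) • ⟨ok, N_le_P okN⟩) := by
        apply Subtype.ext
        simp only [Submodule.coe_add, SetLike.val_smul, hcr]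
        simp only [oi, oj, ok, Prod.smul_mk, Prod.mk_add_mk]
        refine Prod.ext ?_ (by simp)
        ext <;> simp
      have hphiv : φ ⟨a₁ • oi + a₂ • cross oi (((qmk 0 0 b c), 0) : SplitOct),
            Pplane.add_mem (Pplane.smul_mem a₁ oi_mem_P)
              (Pplane.smul_mem a₂ (N_le_P (cross_oi_mem_N huN)))⟩
          = (0, (qmk (-(a₂*c)*s - a₂*b*s') (a₂*b*s - a₂*c*s') 0 0)) := by
        rw [hvP, map_add, map_add, map_smul, map_smul, map_smul, hφi, hsj, hsk, smul_zero,
          zero_add]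
        refine Prod.ext (by simp) ?_
        ext <;> simp <;> ring
      rw [hphiu, hphiv, hcr, hv, huv, mul_fst_snd]
      simp only [polar_apply, mk_eq_qmk, qmk_re, qmk_imI, qmk_imJ, qmk_imK, Quaternion.re_mul, Quaternion.imI_mul, Quaternion.imJ_mul,
        Quaternion.imK_mul, Quaternion.re_star, Quaternion.imI_star, Quaternion.imJ_star,
        Quaternion.imK_star, Quaternion.re_zero, Quaternion.imI_zero, Quaternion.imJ_zero,
        Quaternion.imK_zero]
      field_simp
      ring_nf
  · intro z hz
    obtain ⟨m, n, rfl⟩ := mem_B_iff.mp hz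
    rw [cross_snd_fst]
    have hpx : (qmk 0 0 m n) * star (qmk 0 0 b c) = qmk (m*b + n*c) (n*b - m*c) 0 0 := by
      ext <;>
          simp [Quaternion.re_mul, Quaternion.imI_mul, Quaternion.imJ_mul,
            Quaternion.imK_mul] <;>
        ring
    rw [hpx]
    exact mem_T_of _ _

end SplitOct
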